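/- Let g be a formal power series over ℚ whose coefficients satisfy: coefficient of X is 1, coefficient of X³ is 1, coefficient of X⁵ is 2, coefficient of X⁷ is 4, coefficient of X⁹ is 5, coefficient of X¹¹ is 6, and all even-degree coefficients and the constant coefficient are 0. Then there is no formal power series s over ℚ with all coefficients nonnegative such that g(−s(−X)) = X (composition of formal power series, where s has zero constant term). -/

import Mathlib

open PowerSeries

/-- Composition `g ∘ h` of formal power series (intended for `h` with zero
constant coefficient). -/
noncomputable def PowerSeries.compose (g h : PowerSeries ℚ) : PowerSeries ℚ :=
  PowerSeries.mk fun n =>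
    PowerSeries.coeff n (Polynomial.aeval h (PowerSeries.trunc (n + 1) g))

lemma coeff_compose' (g h : PowerSeries ℚ) (n : ℕ) :
    coeff n (PowerSeries.compose g h)
      = ∑ i ∈ Finset.range (n+1), coeff i g * coeff n (h ^ i) := by
  rw [PowerSeries.compose, coeff_mk, PowerSeries.trunc_apply, map_sum, map_sum,
    Finset.range_eq_Ico]
  apply Finset.sum_congr rfl
  intro i _
  rw [Polynomial.aeval_monomial]
  simp [Algebra.algebraMap_eq_smul_one]

lemma coeff_pow_congr (f q : PowerSeries ℚ) (n i : ℕ) (hi : 2 ≤ i)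
    (hf0 : constantCoeff f = 0) (hq0 : constantCoeff q = 0)
    (hag : ∀ k < n, coeff k f = coeff k q) :
    coeff n (f ^ i) = coeff n (q ^ i) := by
  have key : coeff n (f ^ i - q ^ i) = 0 := by
    rw [← geom_sum₂_mul f q i, coeff_mul]
    apply Finset.sum_eq_zero
    intro p hp
    have hpn : p.1 + p.2 = n := Finset.HasAntidiagonal.mem_antidiagonal.mp hp
    rcases lt_or_ge p.2 n with hlt | hge
    · rw [map_sub, hag p.2 hlt, sub_self, mul_zero]
    · have h2 : p.2 = n := le_antisymm (by omega) hge
      have h1 : p.1 = 0 := by omega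
      rw [h1, coeff_zero_eq_constantCoeff, map_sum]
      have hz : ∀ j ∈ Finset.range i,
          constantCoeff (f ^ j * q ^ (i - 1 - j)) = 0 := by
        intro j _
        rw [map_mul, map_pow, map_pow, hf0, hq0]
        rcases Nat.eq_zero_or_pos j with rfl | hj
        · rw [pow_zero, one_mul, zero_pow (by omega)]
        · rw [zero_pow (by omega), zero_mul]
      rw [Finset.sum_eq_zero hz, zero_mul]
  have hsub := map_sub (coeff n) (f ^ i) (q ^ i)
  rw [key] at hsub
  linarith

noncomputable def Qs : PowerSeries ℚ := X - X^3 + X^5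

lemma QsP3 : Qs ^ 3 = X^3 - 3*X^5 + 6*X^7 - 7*X^9 + 6*X^11 - 3*X^13 + X^15 := by
  unfold Qs; ring

lemma QsP5 : Qs ^ 5 = X^5 - 5*X^7 + 15*X^9 - 30*X^11 + 45*X^13 - 51*X^15 + 45*X^17 - 30*X^19 + 15*X^21 - 5*X^23 + X^25 := by
  unfold Qs; ring

lemma QsP7 : Qs ^ 7 = X^7 - 7*X^9 + 28*X^11 - 77*X^13 + 161*X^15 - 266*X^17 + 357*X^19 - 393*X^21 + 357*X^23 - 266*X^25 + 161*X^27 - 77*X^29 + 28*X^31 - 7*X^33 + X^35 := by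
  unfold Qs; ring

lemma QsP9 : Qs ^ 9 = X^9 - 9*X^11 + 45*X^13 - 156*X^15 + 414*X^17 - 882*X^19 + 1554*X^21 - 2304*X^23 + 2907*X^25 - 3139*X^27 + 2907*X^29 - 2304*X^31 + 1554*X^33 - 882*X^35 + 414*X^37 - 156*X^39 + 45*X^41 - 9*X^43 + X^45 := by
  unfold Qs; ring

lemma QsP11 : Qs ^ 11 = X^11 - 11*X^13 + 66*X^15 - 275*X^17 + 880*X^19 - 2277*X^21 + 4917*X^23 - 9042*X^25 + 14355*X^27 - 19855*X^29 + 24068*X^31 - 25653*X^33 + 24068*X^35 - 19855*X^37 + 14355*X^39 - 9042*X^41 + 4917*X^43 - 2277*X^45 + 880*X^47 - 275*X^49 + 66*X^51 - 11*X^53 + X^55 := by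
  unfold Qs; ring

lemma cQ3_3 : coeff 3 (Qs ^ 3) = 1 := by
  rw [QsP3]
  simp [← map_ofNat (C (R := ℚ)), coeff_C_mul, coeff_X_pow]

lemma cQ4_3 : coeff 4 (Qs ^ 3) = 0 := by
  rw [QsP3]
  simp [← map_ofNat (C (R := ℚ)), coeff_C_mul, coeff_X_pow]

lemma cQ5_3 : coeff 5 (Qs ^ 3) = -3 := by
  rw [QsP3]
  simp [← map_ofNat (C (R := ℚ)), coeff_C_mul, coeff_X_pow]

lemma cQ5_5 : coeff 5 (Qs ^ 5) = 1 := by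
  rw [QsP5]
  simp [← map_ofNat (C (R := ℚ)), coeff_C_mul, coeff_X_pow]

lemma cQ6_3 : coeff 6 (Qs ^ 3) = 0 := by
  rw [QsP3]
  simp [← map_ofNat (C (R := ℚ)), coeff_C_mul, coeff_X_pow]

lemma cQ6_5 : coeff 6 (Qs ^ 5) = 0 := by
  rw [QsP5]
  simp [← map_ofNat (C (R := ℚ)), coeff_C_mul, coeff_X_pow]

lemma cQ7_3 : coeff 7 (Qs ^ 3) = 6 := by
  rw [QsP3]
  simp [← map_ofNat (C (R := ℚ)), coeff_C_mul, coeff_X_pow]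

lemma cQ7_5 : coeff 7 (Qs ^ 5) = -5 := by
  rw [QsP5]
  simp [← map_ofNat (C (R := ℚ)), coeff_C_mul, coeff_X_pow]

lemma cQ7_7 : coeff 7 (Qs ^ 7) = 1 := by
  rw [QsP7]
  simp [← map_ofNat (C (R := ℚ)), coeff_C_mul, coeff_X_pow]

lemma cQ8_3 : coeff 8 (Qs ^ 3) = 0 := by
  rw [QsP3]
  simp [← map_ofNat (C (R := ℚ)), coeff_C_mul, coeff_X_pow]

lemma cQ8_5 : coeff 8 (Qs ^ 5) = 0 := by
  rw [QsP5]
  simp [← map_ofNat (C (R := ℚ)), coeff_C_mul, coeff_X_pow]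

lemma cQ8_7 : coeff 8 (Qs ^ 7) = 0 := by
  rw [QsP7]
  simp [← map_ofNat (C (R := ℚ)), coeff_C_mul, coeff_X_pow]

lemma cQ9_3 : coeff 9 (Qs ^ 3) = -7 := by
  rw [QsP3]
  simp [← map_ofNat (C (R := ℚ)), coeff_C_mul, coeff_X_pow]

lemma cQ9_5 : coeff 9 (Qs ^ 5) = 15 := by
  rw [QsP5]
  simp [← map_ofNat (C (R := ℚ)), coeff_C_mul, coeff_X_pow]

lemma cQ9_7 : coeff 9 (Qs ^ 7) = -7 := by
  rw [QsP7]
  simp [← map_ofNat (C (R := ℚ)), coeff_C_mul, coeff_X_pow]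

lemma cQ9_9 : coeff 9 (Qs ^ 9) = 1 := by
  rw [QsP9]
  simp [← map_ofNat (C (R := ℚ)), coeff_C_mul, coeff_X_pow]

lemma cQ10_3 : coeff 10 (Qs ^ 3) = 0 := by
  rw [QsP3]
  simp [← map_ofNat (C (R := ℚ)), coeff_C_mul, coeff_X_pow]

lemma cQ10_5 : coeff 10 (Qs ^ 5) = 0 := by
  rw [QsP5]
  simp [← map_ofNat (C (R := ℚ)), coeff_C_mul, coeff_X_pow]

lemma cQ10_7 : coeff 10 (Qs ^ 7) = 0 := by
  rw [QsP7]
  simp [← map_ofNat (C (R := ℚ)), coeff_C_mul, coeff_X_pow]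

lemma cQ10_9 : coeff 10 (Qs ^ 9) = 0 := by
  rw [QsP9]
  simp [← map_ofNat (C (R := ℚ)), coeff_C_mul, coeff_X_pow]

lemma cQ11_3 : coeff 11 (Qs ^ 3) = 6 := by
  rw [QsP3]
  simp [← map_ofNat (C (R := ℚ)), coeff_C_mul, coeff_X_pow]

lemma cQ11_5 : coeff 11 (Qs ^ 5) = -30 := by
  rw [QsP5]
  simp [← map_ofNat (C (R := ℚ)), coeff_C_mul, coeff_X_pow]

lemma cQ11_7 : coeff 11 (Qs ^ 7) = 28 := by
  rw [QsP7]
  simp [← map_ofNat (C (R := ℚ)), coeff_C_mul, coeff_X_pow]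

lemma cQ11_9 : coeff 11 (Qs ^ 9) = -9 := by
  rw [QsP9]
  simp [← map_ofNat (C (R := ℚ)), coeff_C_mul, coeff_X_pow]

lemma cQ11_11 : coeff 11 (Qs ^ 11) = 1 := by
  rw [QsP11]
  simp [← map_ofNat (C (R := ℚ)), coeff_C_mul, coeff_X_pow]

lemma qs0 : coeff 0 Qs = 0 := by
  unfold Qs
  simp [coeff_X_pow, PowerSeries.coeff_X]

lemma qs1 : coeff 1 Qs = 1 := by
  unfold Qs
  simp [coeff_X_pow, PowerSeries.coeff_X]

lemma qs2 : coeff 2 Qs = 0 := by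
  unfold Qs
  simp [coeff_X_pow, PowerSeries.coeff_X]

lemma qs3 : coeff 3 Qs = -1 := by
  unfold Qs
  simp [coeff_X_pow, PowerSeries.coeff_X]

lemma qs4 : coeff 4 Qs = 0 := by
  unfold Qs
  simp [coeff_X_pow, PowerSeries.coeff_X]

lemma qs5 : coeff 5 Qs = 1 := by
  unfold Qs
  simp [coeff_X_pow, PowerSeries.coeff_X]

lemma qs6 : coeff 6 Qs = 0 := by
  unfold Qs
  simp [coeff_X_pow, PowerSeries.coeff_X]

lemma qs7 : coeff 7 Qs = 0 := by
  unfold Qs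
  simp [coeff_X_pow, PowerSeries.coeff_X]

lemma qs8 : coeff 8 Qs = 0 := by
  unfold Qs
  simp [coeff_X_pow, PowerSeries.coeff_X]

lemma qs9 : coeff 9 Qs = 0 := by
  unfold Qs
  simp [coeff_X_pow, PowerSeries.coeff_X]

lemma qs10 : coeff 10 Qs = 0 := by
  unfold Qs
  simp [coeff_X_pow, PowerSeries.coeff_X]

theorem stmt1 (g : PowerSeries ℚ)
    (h1 : coeff 1 g = 1) (h3 : coeff 3 g = 1) (h5 : coeff 5 g = 2)
    (h7 : coeff 7 g = 4) (h9 : coeff 9 g = 5) (h11 : coeff 11 g = 6)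
    (heven : ∀ n, coeff (2 * n) g = 0) :
    ¬ ∃ s : PowerSeries ℚ,
        (∀ n, 0 ≤ coeff n s) ∧ constantCoeff s = 0 ∧
        PowerSeries.compose g (-(PowerSeries.rescale (-1) s)) = X := by
  rintro ⟨s, hpos, hs0, hcomp⟩
  set f : PowerSeries ℚ := -(PowerSeries.rescale (-1) s) with hf
  have hcoeff : ∀ n, coeff n f = -((-1:ℚ)^n * coeff n s) := by
    intro n; rw [hf, map_neg, coeff_rescale]
  have hf0 : constantCoeff f = 0 := by
    rw [← coeff_zero_eq_constantCoeff, hcoeff]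
    rw [← coeff_zero_eq_constantCoeff] at hs0
    rw [hs0]; ring
  have hq0 : constantCoeff Qs = 0 := by
    unfold Qs; simp
  have E : ∀ n, ∑ i ∈ Finset.range (n+1), coeff i g * coeff n (f^i)
      = coeff n (X : PowerSeries ℚ) := by
    intro n; rw [← coeff_compose', hcomp]
  have g0 : coeff 0 g = 0 := by
    rw [coeff_zero_eq_constantCoeff]; simpa using heven 0
  have g2 : coeff 2 g = 0 := by have := heven 1; norm_num at this; exact this
  have g4 : coeff 4 g = 0 := by have := heven 2; norm_num at this; exact this
  have g6 : coeff 6 g = 0 := by have := heven 3; norm_num at this; exact this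
  have g8 : coeff 8 g = 0 := by have := heven 4; norm_num at this; exact this
  have g10 : coeff 10 g = 0 := by have := heven 5; norm_num at this; exact this
  have hb0 : coeff 0 f = 0 := by rw [coeff_zero_eq_constantCoeff]; exact hf0

  have En1 := E 1
  simp only [Finset.sum_range_succ, Finset.sum_range_zero, pow_one, PowerSeries.coeff_X, g0, h1] at En1
  norm_num at En1
  have hb1 : coeff 1 f = 1 := by linarith [En1]

  have En2 := E 2
  simp only [Finset.sum_range_succ, Finset.sum_range_zero, pow_one, PowerSeries.coeff_X, g0, h1, g2] at En2
  norm_num at En2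
  have hb2 : coeff 2 f = 0 := by linarith [En2]

  have ag3 : ∀ k < 3, coeff k f = coeff k Qs := by
    intro k hk
    interval_cases k
    · rw [hb0, qs0]
    · rw [hb1, qs1]
    · rw [hb2, qs2]
  have P3_3 : coeff 3 (f ^ 3) = 1 := by
    rw [coeff_pow_congr f Qs 3 3 (by norm_num) hf0 hq0 ag3, cQ3_3]
  have En3 := E 3
  simp only [Finset.sum_range_succ, Finset.sum_range_zero, pow_one, PowerSeries.coeff_X, g0, h1, g2, h3, P3_3] at En3
  norm_num at En3
  have hb3 : coeff 3 f = -1 := by linarith [En3]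

  have ag4 : ∀ k < 4, coeff k f = coeff k Qs := by
    intro k hk
    interval_cases k
    · rw [hb0, qs0]
    · rw [hb1, qs1]
    · rw [hb2, qs2]
    · rw [hb3, qs3]
  have P4_3 : coeff 4 (f ^ 3) = 0 := by
    rw [coeff_pow_congr f Qs 4 3 (by norm_num) hf0 hq0 ag4, cQ4_3]
  have En4 := E 4
  simp only [Finset.sum_range_succ, Finset.sum_range_zero, pow_one, PowerSeries.coeff_X, g0, h1, g2, h3, P4_3, g4] at En4
  norm_num at En4
  have hb4 : coeff 4 f = 0 := by linarith [En4]

  have ag5 : ∀ k < 5, coeff k f = coeff k Qs := by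
    intro k hk
    interval_cases k
    · rw [hb0, qs0]
    · rw [hb1, qs1]
    · rw [hb2, qs2]
    · rw [hb3, qs3]
    · rw [hb4, qs4]
  have P5_3 : coeff 5 (f ^ 3) = -3 := by
    rw [coeff_pow_congr f Qs 5 3 (by norm_num) hf0 hq0 ag5, cQ5_3]
  have P5_5 : coeff 5 (f ^ 5) = 1 := by
    rw [coeff_pow_congr f Qs 5 5 (by norm_num) hf0 hq0 ag5, cQ5_5]
  have En5 := E 5
  simp only [Finset.sum_range_succ, Finset.sum_range_zero, pow_one, PowerSeries.coeff_X, g0, h1, g2, h3, P5_3, g4, h5, P5_5] at En5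
  norm_num at En5
  have hb5 : coeff 5 f = 1 := by linarith [En5]

  have ag6 : ∀ k < 6, coeff k f = coeff k Qs := by
    intro k hk
    interval_cases k
    · rw [hb0, qs0]
    · rw [hb1, qs1]
    · rw [hb2, qs2]
    · rw [hb3, qs3]
    · rw [hb4, qs4]
    · rw [hb5, qs5]
  have P6_3 : coeff 6 (f ^ 3) = 0 := by
    rw [coeff_pow_congr f Qs 6 3 (by norm_num) hf0 hq0 ag6, cQ6_3]
  have P6_5 : coeff 6 (f ^ 5) = 0 := by
    rw [coeff_pow_congr f Qs 6 5 (by norm_num) hf0 hq0 ag6, cQ6_5]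
  have En6 := E 6
  simp only [Finset.sum_range_succ, Finset.sum_range_zero, pow_one, PowerSeries.coeff_X, g0, h1, g2, h3, P6_3, g4, h5, P6_5, g6] at En6
  norm_num at En6
  have hb6 : coeff 6 f = 0 := by linarith [En6]

  have ag7 : ∀ k < 7, coeff k f = coeff k Qs := by
    intro k hk
    interval_cases k
    · rw [hb0, qs0]
    · rw [hb1, qs1]
    · rw [hb2, qs2]
    · rw [hb3, qs3]
    · rw [hb4, qs4]
    · rw [hb5, qs5]
    · rw [hb6, qs6]
  have P7_3 : coeff 7 (f ^ 3) = 6 := by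
    rw [coeff_pow_congr f Qs 7 3 (by norm_num) hf0 hq0 ag7, cQ7_3]
  have P7_5 : coeff 7 (f ^ 5) = -5 := by
    rw [coeff_pow_congr f Qs 7 5 (by norm_num) hf0 hq0 ag7, cQ7_5]
  have P7_7 : coeff 7 (f ^ 7) = 1 := by
    rw [coeff_pow_congr f Qs 7 7 (by norm_num) hf0 hq0 ag7, cQ7_7]
  have En7 := E 7
  simp only [Finset.sum_range_succ, Finset.sum_range_zero, pow_one, PowerSeries.coeff_X, g0, h1, g2, h3, P7_3, g4, h5, P7_5, g6, h7, P7_7] at En7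
  norm_num at En7
  have hb7 : coeff 7 f = 0 := by linarith [En7]

  have ag8 : ∀ k < 8, coeff k f = coeff k Qs := by
    intro k hk
    interval_cases k
    · rw [hb0, qs0]
    · rw [hb1, qs1]
    · rw [hb2, qs2]
    · rw [hb3, qs3]
    · rw [hb4, qs4]
    · rw [hb5, qs5]
    · rw [hb6, qs6]
    · rw [hb7, qs7]
  have P8_3 : coeff 8 (f ^ 3) = 0 := by
    rw [coeff_pow_congr f Qs 8 3 (by norm_num) hf0 hq0 ag8, cQ8_3]
  have P8_5 : coeff 8 (f ^ 5) = 0 := by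
    rw [coeff_pow_congr f Qs 8 5 (by norm_num) hf0 hq0 ag8, cQ8_5]
  have P8_7 : coeff 8 (f ^ 7) = 0 := by
    rw [coeff_pow_congr f Qs 8 7 (by norm_num) hf0 hq0 ag8, cQ8_7]
  have En8 := E 8
  simp only [Finset.sum_range_succ, Finset.sum_range_zero, pow_one, PowerSeries.coeff_X, g0, h1, g2, h3, P8_3, g4, h5, P8_5, g6, h7, P8_7, g8] at En8
  norm_num at En8
  have hb8 : coeff 8 f = 0 := by linarith [En8]

  have ag9 : ∀ k < 9, coeff k f = coeff k Qs := by
    intro k hk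
    interval_cases k
    · rw [hb0, qs0]
    · rw [hb1, qs1]
    · rw [hb2, qs2]
    · rw [hb3, qs3]
    · rw [hb4, qs4]
    · rw [hb5, qs5]
    · rw [hb6, qs6]
    · rw [hb7, qs7]
    · rw [hb8, qs8]
  have P9_3 : coeff 9 (f ^ 3) = -7 := by
    rw [coeff_pow_congr f Qs 9 3 (by norm_num) hf0 hq0 ag9, cQ9_3]
  have P9_5 : coeff 9 (f ^ 5) = 15 := by
    rw [coeff_pow_congr f Qs 9 5 (by norm_num) hf0 hq0 ag9, cQ9_5]
  have P9_7 : coeff 9 (f ^ 7) = -7 := by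
    rw [coeff_pow_congr f Qs 9 7 (by norm_num) hf0 hq0 ag9, cQ9_7]
  have P9_9 : coeff 9 (f ^ 9) = 1 := by
    rw [coeff_pow_congr f Qs 9 9 (by norm_num) hf0 hq0 ag9, cQ9_9]
  have En9 := E 9
  simp only [Finset.sum_range_succ, Finset.sum_range_zero, pow_one, PowerSeries.coeff_X, g0, h1, g2, h3, P9_3, g4, h5, P9_5, g6, h7, P9_7, g8, h9, P9_9] at En9
  norm_num at En9
  have hb9 : coeff 9 f = 0 := by linarith [En9]

  have ag10 : ∀ k < 10, coeff k f = coeff k Qs := by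
    intro k hk
    interval_cases k
    · rw [hb0, qs0]
    · rw [hb1, qs1]
    · rw [hb2, qs2]
    · rw [hb3, qs3]
    · rw [hb4, qs4]
    · rw [hb5, qs5]
    · rw [hb6, qs6]
    · rw [hb7, qs7]
    · rw [hb8, qs8]
    · rw [hb9, qs9]
  have P10_3 : coeff 10 (f ^ 3) = 0 := by
    rw [coeff_pow_congr f Qs 10 3 (by norm_num) hf0 hq0 ag10, cQ10_3]
  have P10_5 : coeff 10 (f ^ 5) = 0 := by
    rw [coeff_pow_congr f Qs 10 5 (by norm_num) hf0 hq0 ag10, cQ10_5]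
  have P10_7 : coeff 10 (f ^ 7) = 0 := by
    rw [coeff_pow_congr f Qs 10 7 (by norm_num) hf0 hq0 ag10, cQ10_7]
  have P10_9 : coeff 10 (f ^ 9) = 0 := by
    rw [coeff_pow_congr f Qs 10 9 (by norm_num) hf0 hq0 ag10, cQ10_9]
  have En10 := E 10
  simp only [Finset.sum_range_succ, Finset.sum_range_zero, pow_one, PowerSeries.coeff_X, g0, h1, g2, h3, P10_3, g4, h5, P10_5, g6, h7, P10_7, g8, h9, P10_9, g10] at En10
  norm_num at En10
  have hb10 : coeff 10 f = 0 := by linarith [En10]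

  have ag11 : ∀ k < 11, coeff k f = coeff k Qs := by
    intro k hk
    interval_cases k
    · rw [hb0, qs0]
    · rw [hb1, qs1]
    · rw [hb2, qs2]
    · rw [hb3, qs3]
    · rw [hb4, qs4]
    · rw [hb5, qs5]
    · rw [hb6, qs6]
    · rw [hb7, qs7]
    · rw [hb8, qs8]
    · rw [hb9, qs9]
    · rw [hb10, qs10]
  have P11_3 : coeff 11 (f ^ 3) = 6 := by
    rw [coeff_pow_congr f Qs 11 3 (by norm_num) hf0 hq0 ag11, cQ11_3]
  have P11_5 : coeff 11 (f ^ 5) = -30 := by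
    rw [coeff_pow_congr f Qs 11 5 (by norm_num) hf0 hq0 ag11, cQ11_5]
  have P11_7 : coeff 11 (f ^ 7) = 28 := by
    rw [coeff_pow_congr f Qs 11 7 (by norm_num) hf0 hq0 ag11, cQ11_7]
  have P11_9 : coeff 11 (f ^ 9) = -9 := by
    rw [coeff_pow_congr f Qs 11 9 (by norm_num) hf0 hq0 ag11, cQ11_9]
  have P11_11 : coeff 11 (f ^ 11) = 1 := by
    rw [coeff_pow_congr f Qs 11 11 (by norm_num) hf0 hq0 ag11, cQ11_11]
  have En11 := E 11
  simp only [Finset.sum_range_succ, Finset.sum_range_zero, pow_one, PowerSeries.coeff_X, g0, h1, g2, h3, P11_3, g4, h5, P11_5, g6, h7, P11_7, g8, h9, P11_9, g10, h11, P11_11] at En11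
  norm_num at En11
  have hb11 : coeff 11 f = -19 := by linarith [En11]

  have hfin := hcoeff 11
  rw [hb11] at hfin
  have hs11 := hpos 11
  norm_num at hfin
  linarith
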